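/- Let m be a positive integer and let U_1, …, U_m be independent random variables, each uniformly distributed on [0, 1]. Then E[max( max_{i=1}^m U_i , 1 − min_{i=1}^m U_i )] = (2m + 1) / (2m + 2). -/

import Mathlib

open MeasureTheory ProbabilityTheory

lemma aux_cont (m : ℕ) : Continuous (fun t : ℝ => max (2*t-1) 0 ^ m) := by
  fun_prop

lemma aux_integral (m : ℕ) (hm : 0 < m) :
    ∫ t in (0:ℝ)..1, (1 - max (2*t-1) 0 ^ m) = (2 * m + 1) / (2 * m + 2) := by
  have hcont := aux_cont m
  rw [intervalIntegral.integral_sub intervalIntegrable_const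
    (hcont.intervalIntegrable 0 1)]
  have h1 : ∫ t in (0:ℝ)..(1/2:ℝ), max (2*t-1) 0 ^ m = 0 := by
    rw [intervalIntegral.integral_congr (g := fun _ => (0:ℝ))]
    · simp
    · intro t ht
      rw [Set.uIcc_of_le (by norm_num)] at ht
      have : 2*t-1 ≤ 0 := by linarith [ht.2]
      show ((2*t-1) ⊔ 0) ^ m = 0
      rw [max_eq_right this, zero_pow hm.ne']
  have h2 : ∫ t in (1/2:ℝ)..1, max (2*t-1) 0 ^ m = 1 / (2*(m+1)) := by
    rw [intervalIntegral.integral_congr (g := fun t => (2*t-1) ^ m)]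
    · have h := intervalIntegral.integral_comp_mul_add (a := (1/2:ℝ)) (b := 1)
        (c := (2:ℝ)) (f := fun x => x ^ m) (by norm_num) (-1)
      norm_num at h
      simp only [show ∀ x : ℝ, 2*x - 1 = 2*x + -1 from fun x => by ring]
      rw [h]
      norm_num [integral_pow]
      ring
    · intro t ht
      rw [Set.uIcc_of_le (by norm_num)] at ht
      have : (0:ℝ) ≤ 2*t-1 := by linarith [ht.1]
      show ((2*t-1) ⊔ 0) ^ m = (2*t-1) ^ m
      rw [max_eq_left this]
  have hsplit : ∫ t in (0:ℝ)..1, max (2*t-1) 0 ^ m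
      = (∫ t in (0:ℝ)..(1/2:ℝ), max (2*t-1) 0 ^ m)
        + ∫ t in (1/2:ℝ)..1, max (2*t-1) 0 ^ m :=
    (intervalIntegral.integral_add_adjacent_intervals
      (hcont.intervalIntegrable _ _) (hcont.intervalIntegrable _ _)).symm
  rw [hsplit, h1, h2]
  have : (m:ℝ) + 1 ≠ 0 := by positivity
  simp only [intervalIntegral.integral_const, smul_eq_mul]
  field_simp
  ring

/-- Lemma A.1: if `U 1, …, U m` are i.i.d. `Uniform[0,1]` random variables then
`E[max(max_i U i, 1 - min_i U i)] = (2m+1)/(2m+2)`. -/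
theorem expectation_max_max_one_sub_min
    {Ω : Type*} [MeasurableSpace Ω] (μ : Measure Ω) [IsProbabilityMeasure μ]
    (m : ℕ) (hm : 0 < m)
    (U : Fin m → Ω → ℝ) (hUmeas : ∀ i, Measurable (U i))
    (hindep : iIndepFun U μ)
    (hunif : ∀ i, μ.map (U i) = volume.restrict (Set.Icc (0 : ℝ) 1)) :
    ∫ ω, max
        ((Finset.univ.sup' (Finset.univ_nonempty_iff.mpr ⟨⟨0, hm⟩⟩)) (fun i => U i ω))
        (1 - (Finset.univ.inf' (Finset.univ_nonempty_iff.mpr ⟨⟨0, hm⟩⟩)) (fun i => U i ω))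
      ∂μ = (2 * m + 1) / (2 * m + 2) := by
  have ne : (Finset.univ : Finset (Fin m)).Nonempty := Finset.univ_nonempty_iff.mpr ⟨⟨0, hm⟩⟩
  set W : Fin m → Ω → ℝ := fun i ω => max (U i ω) (1 - U i ω) with hW
  set f : Ω → ℝ := fun ω => Finset.univ.sup' ne (fun i => W i ω) with hfdef
  -- the integrand equals f
  have hfeq : ∀ ω, max
      ((Finset.univ.sup' (Finset.univ_nonempty_iff.mpr ⟨⟨0, hm⟩⟩)) (fun i => U i ω))
      (1 - (Finset.univ.inf' (Finset.univ_nonempty_iff.mpr ⟨⟨0, hm⟩⟩)) (fun i => U i ω))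
      = f ω := by
    intro ω
    apply le_antisymm
    · apply max_le
      · exact Finset.sup'_le _ _ fun i _ =>
          le_trans (le_max_left _ _) (Finset.le_sup' (fun j => W j ω) (Finset.mem_univ i))
      · obtain ⟨j, -, hj⟩ := Finset.exists_mem_eq_inf'
          (Finset.univ_nonempty_iff.mpr ⟨⟨0, hm⟩⟩) (fun i => U i ω)
        rw [hj]
        exact le_trans (le_max_right _ _) (Finset.le_sup' (fun j => W j ω) (Finset.mem_univ j))
    · apply Finset.sup'_le
      intro i _
      apply max_le
      · exact le_trans (Finset.le_sup' (fun j => U j ω) (Finset.mem_univ i)) (le_max_left _ _)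
      · refine le_trans ?_ (le_max_right _ _)
        have := Finset.inf'_le (fun j => U j ω) (Finset.mem_univ i)
        linarith
  rw [integral_congr_ae (Filter.Eventually.of_forall hfeq)]
  -- measurability
  have hWm : ∀ i, Measurable (W i) := fun i => (hUmeas i).max (measurable_const.sub (hUmeas i))
  have hfm : Measurable f := by
    have : f = Finset.univ.sup' ne W := by
      funext ω; rw [Finset.sup'_apply]
    rw [this]
    exact Finset.measurable_sup' ne fun i _ => hWm i
  -- a.e. bounds
  have hae : ∀ᵐ ω ∂μ, ∀ i, U i ω ∈ Set.Icc (0:ℝ) 1 := by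
    rw [ae_all_iff]
    intro i
    rw [ae_iff]
    have h0 : μ (U i ⁻¹' (Set.Icc (0:ℝ) 1)ᶜ) = 0 := by
      rw [← Measure.map_apply (hUmeas i) measurableSet_Icc.compl, hunif i,
        Measure.restrict_apply measurableSet_Icc.compl, Set.compl_inter_self, measure_empty]
    exact h0
  have hbound : ∀ᵐ ω ∂μ, f ω ∈ Set.Icc (0:ℝ) 1 := by
    filter_upwards [hae] with ω hω
    constructor
    · refine le_trans ?_ (Finset.le_sup' (fun j => W j ω) (Finset.mem_univ ⟨0, hm⟩))
      have := (hω ⟨0, hm⟩).2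
      exact le_trans (by linarith) (le_max_right _ _)
    · apply Finset.sup'_le
      intro i _
      exact max_le (hω i).2 (by linarith [(hω i).1])
  -- integrability
  have hint : Integrable f μ := by
    refine ⟨hfm.aestronglyMeasurable, ?_⟩
    apply HasFiniteIntegral.of_bounded (C := (1:ℝ))
    filter_upwards [hbound] with ω hω
    rw [Real.norm_eq_abs, abs_le]
    exact ⟨by linarith [hω.1], hω.2⟩
  -- layer cake
  rw [hint.integral_eq_integral_Ioc_meas_le
    (hbound.mono fun ω h => h.1) (hbound.mono fun ω h => h.2)]
  -- pointwise tail probability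
  have hmeas_t : ∀ t ∈ Set.Ioc (0:ℝ) 1,
      (μ {a | t ≤ f a}).toReal = 1 - max (2*t-1) 0 ^ m := by
    intro t ht
    have hIoo : ∀ i, μ (U i ⁻¹' Set.Ioo (1-t) t) = ENNReal.ofReal (2*t-1) := by
      intro i
      rw [← Measure.map_apply (hUmeas i) measurableSet_Ioo, hunif i,
        Measure.restrict_apply measurableSet_Ioo]
      rcases le_or_gt t (1/2) with h | h
      · rw [Set.Ioo_eq_empty (by intro hc; linarith), Set.empty_inter, measure_empty,
          eq_comm, ENNReal.ofReal_eq_zero]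
        linarith
      · have hsub : Set.Ioo (1-t) t ⊆ Set.Icc (0:ℝ) 1 := fun x hx =>
          ⟨by linarith [hx.1, ht.2], le_of_lt (lt_of_lt_of_le hx.2 ht.2)⟩
        rw [Set.inter_eq_left.mpr hsub, Real.volume_Ioo]
        congr 1; ring
    have hlt : μ {a | f a < t} = ENNReal.ofReal (2*t-1) ^ m := by
      have hset : {a | f a < t} = ⋂ i, U i ⁻¹' Set.Ioo (1-t) t := by
        ext ω
        simp only [Set.mem_setOf_eq, Set.mem_iInter, Set.mem_preimage, Set.mem_Ioo]
        constructor
        · intro h i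
          have hWi : W i ω < t :=
            lt_of_le_of_lt (Finset.le_sup' (fun j => W j ω) (Finset.mem_univ i)) h
          obtain ⟨h1, h2⟩ := max_lt_iff.mp hWi
          exact ⟨by linarith, h1⟩
        · intro h
          exact (Finset.sup'_lt_iff ne).mpr fun i _ => max_lt (h i).2 (by linarith [(h i).1])
      rw [hset, hindep.meas_iInter (fun i => ⟨Set.Ioo (1-t) t, measurableSet_Ioo, rfl⟩)]
      simp [hIoo]
    have hcompl : {a | t ≤ f a} = {a | f a < t}ᶜ := by
      ext ω; simp [not_lt]
    rw [hcompl, prob_compl_eq_one_sub (measurableSet_lt hfm measurable_const), hlt]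
    have hle1 : ENNReal.ofReal (2*t-1) ^ m ≤ 1 := by
      apply pow_le_one' (ENNReal.ofReal_le_one.mpr (by linarith [ht.2]))
    rw [ENNReal.toReal_sub_of_le hle1 (by simp), ENNReal.toReal_one, ENNReal.toReal_pow,
      ENNReal.toReal_ofReal']
  rw [setIntegral_congr_fun measurableSet_Ioc (f := fun t => μ.real {a | t ≤ f a}) hmeas_t,
    ← intervalIntegral.integral_of_le (by norm_num : (0:ℝ) ≤ 1)]
  exact aux_integral m hm
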